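/- For ε > 0, let P_ε ⊂ ℝ³ be the convex hull of the fourteen points ±(1/4, 0, 0), ±(0, 1/4, 0), ±(0, 0, ε), ±(1/6, 1/6, 1/6), ±(1/6, 1/6, −1/6), ±(1/6, −1/6, 1/6), ±(1/6, −1/6, −1/6). There exist infinitely many values of ε in the open interval (1/6, 1/4) for which there is no finite family of vectors β₁, …, β_k ∈ ℝ³ such that P_ε = {v ∈ ℝ³ : Σ_{i=1}^k |⟨β_i, v⟩| ≤ 1}. -/

import Mathlib

lemma abs_hlawka_real (a b c : ℝ) : |a+b|+|b+c|+|c+a| ≤ |a|+|b|+|c|+|a+b+c| := by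
  rcases abs_cases (a+b) with ⟨h1,_⟩|⟨h1,_⟩ <;>
  rcases abs_cases (b+c) with ⟨h2,_⟩|⟨h2,_⟩ <;>
  rcases abs_cases (c+a) with ⟨h3,_⟩|⟨h3,_⟩ <;>
  rcases abs_cases (a+b+c) with ⟨h4,_⟩|⟨h4,_⟩ <;>
  rcases abs_cases a with ⟨h5,_⟩|⟨h5,_⟩ <;>
  rcases abs_cases b with ⟨h6,_⟩|⟨h6,_⟩ <;>
  rcases abs_cases c with ⟨h7,_⟩|⟨h7,_⟩ <;>
  linarith

lemma hlawka_coord (x y z : ℝ) :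
    |(-2)*z| + |2*x| + |2*y|
      ≤ |x+y+z| + |x+y-z| + |x-y+z| + |x-y-z| := by
  have h := abs_hlawka_real (-(x-y+z)) (x-y-z) (x+y+z)
  have e1 : |(-(x-y+z)) + (x-y-z)| = |(-2)*z| := by ring_nf
  have e2 : |(x-y-z) + (x+y+z)| = |2*x| := by ring_nf
  have e3 : |(x+y+z) + -(x-y+z)| = |2*y| := by ring_nf
  have e4 : |(-(x-y+z)) + (x-y-z) + (x+y+z)| = |x+y-z| := by ring_nf
  have e5 : |(-(x-y+z))| = |x-y+z| := abs_neg _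
  rw [e1, e2, e3, e4, e5] at h
  linarith

lemma gauge_lb {k : ℕ} (β : Fin k → EuclideanSpace ℝ (Fin 3))
    (S : Set (EuclideanSpace ℝ (Fin 3)))
    (h : convexHull ℝ S = {v : EuclideanSpace ℝ (Fin 3) | ∑ i, |(inner ℝ (β i) v : ℝ)| ≤ 1})
    (u₀ v : EuclideanSpace ℝ (Fin 3))
    (hface : ∀ p ∈ S, (inner ℝ u₀ p : ℝ) ≤ 1) :
    (inner ℝ u₀ v : ℝ) ≤ ∑ i, |(inner ℝ (β i) v : ℝ)| := by
  set c : ℝ := ∑ i, |(inner ℝ (β i) v : ℝ)| with hc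
  have hc0 : 0 ≤ c := Finset.sum_nonneg fun i _ => abs_nonneg _
  by_contra hlt
  push_neg at hlt
  set t : ℝ := (c + inner ℝ u₀ v) / 2 with ht
  have ht0 : 0 < t := by simp only [ht]; linarith
  have htc : c < t := by simp only [ht]; linarith
  have htI : t < inner ℝ u₀ v := by simp only [ht]; linarith
  have hmem : t⁻¹ • v ∈ {v : EuclideanSpace ℝ (Fin 3) | ∑ i, |(inner ℝ (β i) v : ℝ)| ≤ 1} := by
    have heq : ∑ i, |(inner ℝ (β i) (t⁻¹ • v) : ℝ)| = t⁻¹ * c := by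
      rw [hc, Finset.mul_sum]
      refine Finset.sum_congr rfl fun i _ => ?_
      rw [real_inner_smul_right, abs_mul, abs_of_pos (inv_pos.2 ht0)]
    rw [Set.mem_setOf_eq, heq, inv_mul_le_iff₀ ht0, mul_one]
    exact le_of_lt htc
  rw [← h] at hmem
  have hsub : convexHull ℝ S ⊆ {x : EuclideanSpace ℝ (Fin 3) | (inner ℝ u₀ x : ℝ) ≤ 1} :=
    convexHull_min hface
      (convex_halfSpace_le ⟨fun x y => inner_add_right u₀ x y, fun r x => real_inner_smul_right u₀ x r⟩ 1)
  have hle := hsub hmem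
  rw [Set.mem_setOf_eq, real_inner_smul_right, inv_mul_le_iff₀ ht0, mul_one] at hle
  linarith

set_option maxHeartbeats 1000000 in
theorem infinitely_many_nonrealizable_polyhedra :
    {ε : ℝ | ε ∈ Set.Ioo (1/6 : ℝ) (1/4 : ℝ) ∧
      ¬ ∃ (k : ℕ) (β : Fin k → EuclideanSpace ℝ (Fin 3)),
          convexHull ℝ
            ({(!₂[1/4, 0, 0] : EuclideanSpace ℝ (Fin 3)),
              -(!₂[1/4, 0, 0] : EuclideanSpace ℝ (Fin 3)),
              (!₂[0, 1/4, 0] : EuclideanSpace ℝ (Fin 3)),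
              -(!₂[0, 1/4, 0] : EuclideanSpace ℝ (Fin 3)),
              (!₂[0, 0, ε] : EuclideanSpace ℝ (Fin 3)),
              -(!₂[0, 0, ε] : EuclideanSpace ℝ (Fin 3)),
              (!₂[1/6, 1/6, 1/6] : EuclideanSpace ℝ (Fin 3)),
              -(!₂[1/6, 1/6, 1/6] : EuclideanSpace ℝ (Fin 3)),
              (!₂[1/6, 1/6, -(1/6)] : EuclideanSpace ℝ (Fin 3)),
              -(!₂[1/6, 1/6, -(1/6)] : EuclideanSpace ℝ (Fin 3)),
              (!₂[1/6, -(1/6), 1/6] : EuclideanSpace ℝ (Fin 3)),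
              -(!₂[1/6, -(1/6), 1/6] : EuclideanSpace ℝ (Fin 3)),
              (!₂[1/6, -(1/6), -(1/6)] : EuclideanSpace ℝ (Fin 3)),
              -(!₂[1/6, -(1/6), -(1/6)] : EuclideanSpace ℝ (Fin 3))} :
                Set (EuclideanSpace ℝ (Fin 3))) =
            {v : EuclideanSpace ℝ (Fin 3) |
              ∑ i, |(inner ℝ (β i) v : ℝ)| ≤ 1}}.Infinite := by
  apply (Set.Ioo_infinite (show (1/6:ℝ) < 1/4 by norm_num)).mono
  rintro ε hε
  refine ⟨hε, ?_⟩
  rintro ⟨k, β, h⟩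
  obtain ⟨hε1, hε2⟩ := hε
  have hε0 : (0:ℝ) < ε := by linarith
  set S : Set (EuclideanSpace ℝ (Fin 3)) :=
    {(!₂[1/4, 0, 0] : EuclideanSpace ℝ (Fin 3)),
      -(!₂[1/4, 0, 0] : EuclideanSpace ℝ (Fin 3)),
      (!₂[0, 1/4, 0] : EuclideanSpace ℝ (Fin 3)),
      -(!₂[0, 1/4, 0] : EuclideanSpace ℝ (Fin 3)),
      (!₂[0, 0, ε] : EuclideanSpace ℝ (Fin 3)),
      -(!₂[0, 0, ε] : EuclideanSpace ℝ (Fin 3)),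
      (!₂[1/6, 1/6, 1/6] : EuclideanSpace ℝ (Fin 3)),
      -(!₂[1/6, 1/6, 1/6] : EuclideanSpace ℝ (Fin 3)),
      (!₂[1/6, 1/6, -(1/6)] : EuclideanSpace ℝ (Fin 3)),
      -(!₂[1/6, 1/6, -(1/6)] : EuclideanSpace ℝ (Fin 3)),
      (!₂[1/6, -(1/6), 1/6] : EuclideanSpace ℝ (Fin 3)),
      -(!₂[1/6, -(1/6), 1/6] : EuclideanSpace ℝ (Fin 3)),
      (!₂[1/6, -(1/6), -(1/6)] : EuclideanSpace ℝ (Fin 3)),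
      -(!₂[1/6, -(1/6), -(1/6)] : EuclideanSpace ℝ (Fin 3))} with hS
  -- upper bounds: the cube vertices belong to the unit ball
  have hub : ∀ p ∈ S, ∑ i, |(inner ℝ (β i) p : ℝ)| ≤ 1 := by
    intro p hp
    have := subset_convexHull ℝ S hp
    rw [h] at this
    exact this
  have hu1 : ∑ i, |(inner ℝ (β i) (!₂[1/6, 1/6, 1/6] : EuclideanSpace ℝ (Fin 3)) : ℝ)| ≤ 1 := by
    refine hub _ ?_; rw [hS]; simp
  have hu2 : ∑ i, |(inner ℝ (β i) (!₂[1/6, 1/6, -(1/6)] : EuclideanSpace ℝ (Fin 3)) : ℝ)| ≤ 1 := by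
    refine hub _ ?_; rw [hS]; simp
  have hu3 : ∑ i, |(inner ℝ (β i) (!₂[1/6, -(1/6), 1/6] : EuclideanSpace ℝ (Fin 3)) : ℝ)| ≤ 1 := by
    refine hub _ ?_; rw [hS]; simp
  have hu4 : ∑ i, |(inner ℝ (β i) (!₂[1/6, -(1/6), -(1/6)] : EuclideanSpace ℝ (Fin 3)) : ℝ)| ≤ 1 := by
    refine hub _ ?_; rw [hS]; simp
  -- supporting functionals and test vectors
  obtain ⟨d1, hd1⟩ : ∃ u : EuclideanSpace ℝ (Fin 3), u = !₂[0, 0, -(1/ε)] := ⟨_, rfl⟩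
  obtain ⟨d2, hd2⟩ : ∃ u : EuclideanSpace ℝ (Fin 3), u = !₂[4, 0, 0] := ⟨_, rfl⟩
  obtain ⟨d3, hd3⟩ : ∃ u : EuclideanSpace ℝ (Fin 3), u = !₂[0, 4, 0] := ⟨_, rfl⟩
  obtain ⟨v1, hv1⟩ : ∃ u : EuclideanSpace ℝ (Fin 3), u = !₂[0, 0, -2] := ⟨_, rfl⟩
  obtain ⟨v2, hv2⟩ : ∃ u : EuclideanSpace ℝ (Fin 3), u = !₂[2, 0, 0] := ⟨_, rfl⟩
  obtain ⟨v3, hv3⟩ : ∃ u : EuclideanSpace ℝ (Fin 3), u = !₂[0, 2, 0] := ⟨_, rfl⟩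
  have h1e : 1/ε < 6 := by rw [div_lt_iff₀ hε0]; linarith
  have hinv : ε⁻¹ < 6 := by rwa [one_div] at h1e
  have hinv0 : 0 < ε⁻¹ := inv_pos.2 hε0
  have hcan : ε⁻¹ * ε = 1 := inv_mul_cancel₀ (ne_of_gt hε0)
  -- lower bounds via supporting functionals
  have hface1 : ∀ p ∈ S, (inner ℝ d1 p : ℝ) ≤ 1 := by
    intro p hp
    rw [hS] at hp
    simp only [Set.mem_insert_iff, Set.mem_singleton_iff] at hp
    rw [hd1]
    rcases hp with rfl|rfl|rfl|rfl|rfl|rfl|rfl|rfl|rfl|rfl|rfl|rfl|rfl|rfl <;>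
      simp [inner_neg_right, PiLp.inner_apply, Fin.sum_univ_three, RCLike.inner_apply] <;>
      nlinarith [hinv, hinv0, hcan]
  have hface2 : ∀ p ∈ S, (inner ℝ d2 p : ℝ) ≤ 1 := by
    intro p hp
    rw [hS] at hp
    simp only [Set.mem_insert_iff, Set.mem_singleton_iff] at hp
    rw [hd2]
    rcases hp with rfl|rfl|rfl|rfl|rfl|rfl|rfl|rfl|rfl|rfl|rfl|rfl|rfl|rfl <;>
      simp [inner_neg_right, PiLp.inner_apply, Fin.sum_univ_three, RCLike.inner_apply] <;>
      norm_num
  have hface3 : ∀ p ∈ S, (inner ℝ d3 p : ℝ) ≤ 1 := by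
    intro p hp
    rw [hS] at hp
    simp only [Set.mem_insert_iff, Set.mem_singleton_iff] at hp
    rw [hd3]
    rcases hp with rfl|rfl|rfl|rfl|rfl|rfl|rfl|rfl|rfl|rfl|rfl|rfl|rfl|rfl <;>
      simp [inner_neg_right, PiLp.inner_apply, Fin.sum_univ_three, RCLike.inner_apply] <;>
      norm_num
  have hl1 : (2:ℝ)/ε ≤ ∑ i, |(inner ℝ (β i) v1 : ℝ)| := by
    refine le_trans (le_of_eq ?_) (gauge_lb β S h d1 v1 hface1)
    rw [hd1, hv1]
    simp [PiLp.inner_apply, Fin.sum_univ_three, RCLike.inner_apply]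
    field_simp
  have hl2 : (8:ℝ) ≤ ∑ i, |(inner ℝ (β i) v2 : ℝ)| := by
    refine le_trans (le_of_eq ?_) (gauge_lb β S h d2 v2 hface2)
    rw [hd2, hv2]
    simp [PiLp.inner_apply, Fin.sum_univ_three, RCLike.inner_apply]
    norm_num
  have hl3 : (8:ℝ) ≤ ∑ i, |(inner ℝ (β i) v3 : ℝ)| := by
    refine le_trans (le_of_eq ?_) (gauge_lb β S h d3 v3 hface3)
    rw [hd3, hv3]
    simp [PiLp.inner_apply, Fin.sum_univ_three, RCLike.inner_apply]
    norm_num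
  -- per-index Hlawka inequality
  have key : ∀ i,
      |(inner ℝ (β i) v1 : ℝ)| + |(inner ℝ (β i) v2 : ℝ)| + |(inner ℝ (β i) v3 : ℝ)|
      ≤ 6 * |(inner ℝ (β i) (!₂[1/6, 1/6, 1/6] : EuclideanSpace ℝ (Fin 3)) : ℝ)|
      + 6 * |(inner ℝ (β i) (!₂[1/6, 1/6, -(1/6)] : EuclideanSpace ℝ (Fin 3)) : ℝ)|
      + 6 * |(inner ℝ (β i) (!₂[1/6, -(1/6), 1/6] : EuclideanSpace ℝ (Fin 3)) : ℝ)|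
      + 6 * |(inner ℝ (β i) (!₂[1/6, -(1/6), -(1/6)] : EuclideanSpace ℝ (Fin 3)) : ℝ)| := by
    intro i
    have e0 : (inner ℝ (β i) v1 : ℝ) = (-2) * (β i 2) := by
      rw [hv1]; simp [PiLp.inner_apply, Fin.sum_univ_three, RCLike.inner_apply]
    have e1 : (inner ℝ (β i) v2 : ℝ) = 2 * (β i 0) := by
      rw [hv2]; simp [PiLp.inner_apply, Fin.sum_univ_three, RCLike.inner_apply]
    have e2 : (inner ℝ (β i) v3 : ℝ) = 2 * (β i 1) := by
      rw [hv3]; simp [PiLp.inner_apply, Fin.sum_univ_three, RCLike.inner_apply]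
    have f1 : 6 * |(inner ℝ (β i) (!₂[1/6, 1/6, 1/6] : EuclideanSpace ℝ (Fin 3)) : ℝ)|
        = |β i 0 + β i 1 + β i 2| := by
      rw [show (6:ℝ) = |6| by norm_num, ← abs_mul]
      congr 1
      simp [PiLp.inner_apply, Fin.sum_univ_three, RCLike.inner_apply]; ring
    have f2 : 6 * |(inner ℝ (β i) (!₂[1/6, 1/6, -(1/6)] : EuclideanSpace ℝ (Fin 3)) : ℝ)|
        = |β i 0 + β i 1 - β i 2| := by
      rw [show (6:ℝ) = |6| by norm_num, ← abs_mul]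
      congr 1
      simp [PiLp.inner_apply, Fin.sum_univ_three, RCLike.inner_apply]; ring
    have f3 : 6 * |(inner ℝ (β i) (!₂[1/6, -(1/6), 1/6] : EuclideanSpace ℝ (Fin 3)) : ℝ)|
        = |β i 0 - β i 1 + β i 2| := by
      rw [show (6:ℝ) = |6| by norm_num, ← abs_mul]
      congr 1
      simp [PiLp.inner_apply, Fin.sum_univ_three, RCLike.inner_apply]; ring
    have f4 : 6 * |(inner ℝ (β i) (!₂[1/6, -(1/6), -(1/6)] : EuclideanSpace ℝ (Fin 3)) : ℝ)|
        = |β i 0 - β i 1 - β i 2| := by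
      rw [show (6:ℝ) = |6| by norm_num, ← abs_mul]
      congr 1
      simp [PiLp.inner_apply, Fin.sum_univ_three, RCLike.inner_apply]; ring
    rw [e0, e1, e2, f1, f2, f3, f4]
    exact hlawka_coord (β i 0) (β i 1) (β i 2)
  -- sum it up
  have hsum := Finset.sum_le_sum (fun i (_ : i ∈ Finset.univ) => key i)
  simp only [Finset.sum_add_distrib, ← Finset.mul_sum] at hsum
  have hfin : (2:ℝ)/ε ≤ 8 := by linarith
  rw [div_le_iff₀ hε0] at hfin
  linarith
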